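/- Let S be a standard graded polynomial ring over a field, g_1,...,g_t a homogeneous regular sequence of positive-degree elements generating a prime ideal. Then any permutation of g_1,...,g_t is also a prime sequence. -/

import Mathlib

open MvPolynomial

namespace PrimeSeqAux

variable {k : Type*} [Field k] {n : ℕ}

lemma deg_add (u v : Fin n →₀ ℕ) : (u + v).degree = u.degree + v.degree := by
  simp only [Finsupp.degree_eq_weight_one]
  exact map_add _ u v

lemma hc_mul_right {c h : MvPolynomial (Fin n) k} {dh d : ℕ} (hh : h.IsHomogeneous dh)
    (hle : dh ≤ d) :
    homogeneousComponent d (c * h) = homogeneousComponent (d - dh) c * h := by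
  ext m
  rw [coeff_homogeneousComponent, coeff_mul, coeff_mul]
  by_cases hm : m.degree = d
  · rw [if_pos hm]
    refine Finset.sum_congr rfl fun p hp => ?_
    rw [coeff_homogeneousComponent]
    rcases eq_or_ne (coeff p.2 h) 0 with h0 | h0
    · simp [h0]
    · have hdeg : p.2.degree = dh := by
        by_contra hne; exact h0 (hh.coeff_eq_zero hne)
      have hpm : p.1 + p.2 = m := Finset.HasAntidiagonal.mem_antidiagonal.mp hp
      have : p.1.degree = d - dh := by
        have := deg_add p.1 p.2
        rw [hpm, hm, hdeg] at this
        omega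
      rw [if_pos this]
  · rw [if_neg hm]
    symm
    refine Finset.sum_eq_zero fun p hp => ?_
    rw [coeff_homogeneousComponent]
    rcases eq_or_ne (coeff p.2 h) 0 with h0 | h0
    · simp [h0]
    · have hdeg : p.2.degree = dh := by
        by_contra hne; exact h0 (hh.coeff_eq_zero hne)
      have hpm : p.1 + p.2 = m := Finset.HasAntidiagonal.mem_antidiagonal.mp hp
      have : p.1.degree ≠ d - dh := by
        intro hco
        apply hm
        have := deg_add p.1 p.2
        rw [hpm, hco, hdeg] at this
        omega
      rw [if_neg this, zero_mul]

lemma hc_mul_right_zero {c h : MvPolynomial (Fin n) k} {dh d : ℕ} (hh : h.IsHomogeneous dh)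
    (hlt : d < dh) :
    homogeneousComponent d (c * h) = 0 := by
  ext m
  rw [coeff_homogeneousComponent, coeff_zero]
  by_cases hm : m.degree = d
  · rw [if_pos hm, coeff_mul]
    refine Finset.sum_eq_zero fun p hp => ?_
    rcases eq_or_ne (coeff p.2 h) 0 with h0 | h0
    · simp [h0]
    · have hdeg : p.2.degree = dh := by
        by_contra hne; exact h0 (hh.coeff_eq_zero hne)
      have hpm : p.1 + p.2 = m := Finset.HasAntidiagonal.mem_antidiagonal.mp hp
      have := deg_add p.1 p.2
      rw [hpm, hm, hdeg] at this
      omega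
  · rw [if_neg hm]

lemma span_hc {s : Set (MvPolynomial (Fin n) k)} (hs : ∀ x ∈ s, ∃ d, x.IsHomogeneous d)
    (d : ℕ) {x : MvPolynomial (Fin n) k} (hx : x ∈ Ideal.span s) :
    homogeneousComponent d x ∈ Ideal.span s := by
  letI := MvPolynomial.gradedAlgebra (σ := Fin n) (R := k)
  have h := Ideal.homogeneous_span (homogeneousSubmodule (Fin n) k) s
    (fun x hx => by
      obtain ⟨d, hd⟩ := hs x hx
      exact ⟨d, (mem_homogeneousSubmodule _ _).mpr hd⟩)
  have h2 := h d hx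
  have h3 : (DirectSum.decompose (homogeneousSubmodule (Fin n) k) x d : MvPolynomial (Fin n) k)
      = homogeneousComponent d x := MvPolynomial.decomposition.decompose'_apply x d
  rwa [h3] at h2


lemma mem_of_one_add_mul_mem {I : Ideal (MvPolynomial (Fin n) k)}
    (hI : ∀ d x, x ∈ I → homogeneousComponent d x ∈ I)
    {z : MvPolynomial (Fin n) k} (hz : coeff 0 z = 0)
    {y : MvPolynomial (Fin n) k} (hy : (1 + z) * y ∈ I) : y ∈ I := by
  have key : ∀ d, homogeneousComponent d y ∈ I := by
    intro d
    induction d using Nat.strong_induction_on with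
    | _ d ih =>
    set w : MvPolynomial (Fin n) k := y - ∑ e ∈ Finset.range d, homogeneousComponent e y with hw
    have hyw : y - w ∈ I := by
      have : y - w = ∑ e ∈ Finset.range d, homogeneousComponent e y := by rw [hw]; ring
      rw [this]
      exact Ideal.sum_mem _ fun e he => ih e (Finset.mem_range.mp he)
    have hWlow : ∀ m : Fin n →₀ ℕ, m.degree < d → coeff m w = 0 := by
      intro m hm
      rw [hw, coeff_sub, coeff_sum]
      simp only [coeff_homogeneousComponent]
      rw [Finset.sum_ite_eq (Finset.range d) m.degree (fun _ => coeff m y),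
        if_pos (Finset.mem_range.mpr hm), sub_self]
    have hzw : homogeneousComponent d (z * w) = 0 := by
      ext m
      rw [coeff_homogeneousComponent, coeff_zero]
      by_cases hm : m.degree = d
      · rw [if_pos hm, coeff_mul]
        refine Finset.sum_eq_zero fun p hp => ?_
        have hpm : p.1 + p.2 = m := Finset.HasAntidiagonal.mem_antidiagonal.mp hp
        rcases eq_or_ne p.1 0 with h1 | h1
        · rw [h1, hz, zero_mul]
        · have h1d : 0 < p.1.degree :=
            Nat.pos_of_ne_zero fun hd0 => h1 ((Finsupp.degree_eq_zero_iff _).mp hd0)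
          have h2d : p.2.degree < d := by
            have := deg_add p.1 p.2
            rw [hpm, hm] at this
            omega
          rw [hWlow _ h2d, mul_zero]
      · rw [if_neg hm]
    have hIw : homogeneousComponent d ((1 + z) * w) ∈ I := by
      refine hI d _ ?_
      have hrw : (1 + z) * w = (1 + z) * y - (1 + z) * (y - w) := by ring
      rw [hrw]
      exact I.sub_mem hy (I.mul_mem_left _ hyw)
    have hcw : homogeneousComponent d w = homogeneousComponent d y := by
      rw [hw, map_sub, map_sum]
      have hzero : ∀ e ∈ Finset.range d,
          homogeneousComponent d (homogeneousComponent e y) = 0 := by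
        intro e he
        rw [homogeneousComponent_of_mem (homogeneousComponent_mem e y),
          if_neg (by have := Finset.mem_range.mp he; omega)]
      rw [Finset.sum_congr rfl hzero, Finset.sum_const_zero, sub_zero]
    have hfin : homogeneousComponent d ((1 + z) * w) = homogeneousComponent d y := by
      have hexp : (1 + z) * w = w + z * w := by ring
      rw [hexp, map_add, hzw, add_zero, hcw]
    rwa [hfin] at hIw
  have hsum : (∑ i ∈ Finset.range (y.totalDegree + 1), homogeneousComponent i y) ∈ I :=
    Ideal.sum_mem _ fun i _ => key i
  rwa [MvPolynomial.sum_homogeneousComponent] at hsum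

open Pointwise in
lemma torsion_eq_bot {I : Ideal (MvPolynomial (Fin n) k)}
    (hI : ∀ d x, x ∈ I → homogeneousComponent d x ∈ I)
    {a : MvPolynomial (Fin n) k} {da : ℕ} (hda : 0 < da) (ha : a.IsHomogeneous da)
    (K : Submodule (MvPolynomial (Fin n) k)
      (MvPolynomial (Fin n) k ⧸ (I • ⊤ : Submodule (MvPolynomial (Fin n) k) (MvPolynomial (Fin n) k))))
    (hK : K = a • K) : K = ⊥ := by
  have hfg : K.FG := IsNoetherian.noetherian K
  have hle : K ≤ Ideal.span {a} • K := by
    intro x hx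
    rw [hK] at hx
    obtain ⟨y, hy, rfl⟩ := hx
    exact Submodule.smul_mem_smul (Ideal.mem_span_singleton_self a) hy
  obtain ⟨r, hr1, hr0⟩ :=
    Submodule.exists_sub_one_mem_and_smul_eq_zero_of_fg_of_le_smul _ K hfg hle
  obtain ⟨c, hc⟩ := Ideal.mem_span_singleton'.mp hr1
  have hIT : (I • ⊤ : Submodule (MvPolynomial (Fin n) k) (MvPolynomial (Fin n) k)) = I := by
    rw [smul_eq_mul, Ideal.mul_top]
  rw [eq_bot_iff]
  intro x hx
  obtain ⟨y, rfl⟩ := Submodule.Quotient.mk_surjective _ x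
  have h0 := hr0 _ hx
  rw [← Submodule.Quotient.mk_smul, Submodule.Quotient.mk_eq_zero, hIT, smul_eq_mul] at h0
  have hr : r = 1 + c * a := by linear_combination -hc
  rw [hr] at h0
  have hca : coeff 0 (c * a) = 0 := by
    have ha0 : coeff 0 a = 0 := ha.coeff_eq_zero (by simp [map_zero]; omega)
    calc coeff 0 (c * a) = constantCoeff (c * a) := by rw [constantCoeff_eq]
    _ = constantCoeff c * constantCoeff a := map_mul _ _ _
    _ = 0 := by rw [show (constantCoeff a : k) = coeff 0 a from rfl, ha0, mul_zero]
  have hyI : y ∈ I := mem_of_one_add_mul_mem hI hca h0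
  rw [Submodule.mem_bot, Submodule.Quotient.mk_eq_zero, hIT]
  exact hyI


lemma span_prime_descent {s : Set (MvPolynomial (Fin n) k)}
    (hs : ∀ x ∈ s, ∃ d, x.IsHomogeneous d)
    {h : MvPolynomial (Fin n) k} {dh : ℕ} (hdh : 0 < dh) (hh : h.IsHomogeneous dh)
    (hregh : ∀ y, h * y ∈ Ideal.span s → y ∈ Ideal.span s)
    (hP : (Ideal.span s ⊔ Ideal.span {h}).IsPrime) :
    (Ideal.span s).IsPrime := by
  letI := MvPolynomial.gradedAlgebra (σ := Fin n) (R := k)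
  have hJ : ∀ d x, x ∈ Ideal.span s → homogeneousComponent d x ∈ Ideal.span s :=
    fun d x hx => span_hc hs d hx
  have hJhom := Ideal.homogeneous_span (homogeneousSubmodule (Fin n) k) s
    (fun x hx => by
      obtain ⟨d, hd⟩ := hs x hx
      exact ⟨d, (mem_homogeneousSubmodule _ _).mpr hd⟩)
  have hne : Ideal.span s ≠ ⊤ := by
    intro htop
    exact hP.ne_top (by rw [htop]; exact top_sup_eq _)
  -- the one-sided step: from `x ∈ P`, either `x ∈ J` directly (if `dx < dh`)
  -- or we produce `c'` of smaller degree with `c' * y ∈ J` and `x - c' * h ∈ J`.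
  have step : ∀ (x : MvPolynomial (Fin n) k) (dx : ℕ), x.IsHomogeneous dx →
      x ∈ Ideal.span s ⊔ Ideal.span {h} →
      x ∈ Ideal.span s ∨ (dh ≤ dx ∧ ∃ c' : MvPolynomial (Fin n) k,
        c'.IsHomogeneous (dx - dh) ∧ x - c' * h ∈ Ideal.span s) := by
    intro x dx hx hxP
    obtain ⟨j, hjJ, zz, hzz, hxsum⟩ := Submodule.mem_sup.mp hxP
    obtain ⟨c, rfl⟩ := Ideal.mem_span_singleton'.mp hzz
    have hxc : homogeneousComponent dx x = x := by
      rw [homogeneousComponent_of_mem ((mem_homogeneousSubmodule _ _).mpr hx), if_pos rfl]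
    have hdecomp : x = homogeneousComponent dx j + homogeneousComponent dx (c * h) := by
      rw [← hxc]
      conv_lhs => rw [← hxsum]
      rw [map_add]
    by_cases hcase : dh ≤ dx
    · refine Or.inr ⟨hcase, homogeneousComponent (dx - dh) c,
        homogeneousComponent_isHomogeneous _ _, ?_⟩
      rw [hdecomp, hc_mul_right hh hcase]
      have : homogeneousComponent dx j + homogeneousComponent (dx - dh) c * h -
          homogeneousComponent (dx - dh) c * h = homogeneousComponent dx j := by ring
      rw [this]
      exact hJ dx j hjJ
    · left
      rw [hdecomp, hc_mul_right_zero hh (lt_of_not_ge hcase), add_zero]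
      exact hJ dx j hjJ
  -- main strong induction
  have main : ∀ (N : ℕ) (x y : MvPolynomial (Fin n) k) (dx dy : ℕ),
      x.IsHomogeneous dx → y.IsHomogeneous dy → dx + dy < N →
      x * y ∈ Ideal.span s → x ∈ Ideal.span s ∨ y ∈ Ideal.span s := by
    intro N
    induction N with
    | zero => intro x y dx dy _ _ hlt _; omega
    | succ N ihN =>
      intro x y dx dy hx hy hlt hxy
      have hxyP : x * y ∈ Ideal.span s ⊔ Ideal.span {h} :=
        Ideal.mem_sup_left hxy
      rcases hP.mem_or_mem hxyP with hxP | hyP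
      · rcases step x dx hx hxP with hxJ | ⟨hle, c', hc'hom, hsub⟩
        · exact Or.inl hxJ
        · have hhy : h * (c' * y) ∈ Ideal.span s := by
            have hExp : h * (c' * y) = x * y - (x - c' * h) * y := by ring
            rw [hExp]
            exact Ideal.sub_mem _ hxy (Ideal.mul_mem_right _ _ hsub)
          have hcy : c' * y ∈ Ideal.span s := hregh _ hhy
          rcases ihN c' y (dx - dh) dy hc'hom hy (by omega) hcy with hcJ | hyJ
          · left
            have : x = (x - c' * h) + c' * h := by ring
            rw [this]
            exact Ideal.add_mem _ hsub (Ideal.mul_mem_right _ _ hcJ)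
          · exact Or.inr hyJ
      · rcases step y dy hy hyP with hyJ | ⟨hle, c', hc'hom, hsub⟩
        · exact Or.inr hyJ
        · have hhy : h * (c' * x) ∈ Ideal.span s := by
            have hExp : h * (c' * x) = x * y - x * (y - c' * h) := by ring
            rw [hExp]
            exact Ideal.sub_mem _ hxy (Ideal.mul_mem_left _ _ hsub)
          have hcx : c' * x ∈ Ideal.span s := hregh _ hhy
          rcases ihN c' x (dy - dh) dx hc'hom hx (by omega) hcx with hcJ | hxJ
          · right
            have : y = (y - c' * h) + c' * h := by ring
            rw [this]
            exact Ideal.add_mem _ hsub (Ideal.mul_mem_right _ _ hcJ)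
          · exact Or.inl hxJ
  refine hJhom.isPrime_of_homogeneous_mem_or_mem hne ?_
  rintro x y ⟨dx, hx⟩ ⟨dy, hy⟩ hxy
  exact main (dx + dy + 1) x y dx dy ((mem_homogeneousSubmodule _ _).mp hx)
    ((mem_homogeneousSubmodule _ _).mp hy) (by omega) hxy


variable (t : ℕ)

/-- The ideal generated by the first `i` entries of the sequence `gs`. -/
noncomputable def pIdeal (gs : Fin t → MvPolynomial (Fin n) k) (i : ℕ) : Ideal (MvPolynomial (Fin n) k) :=
  Ideal.span {p : MvPolynomial (Fin n) k | ∃ j : Fin t, (j : ℕ) < i ∧ p = gs j}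

variable {t : ℕ} (gs : Fin t → MvPolynomial (Fin n) k)

lemma pIdeal_top : pIdeal t gs t = Ideal.span (Set.range gs) := by
  unfold pIdeal
  congr 1
  ext p
  simp only [Set.mem_setOf_eq, Set.mem_range]
  constructor
  · rintro ⟨j, -, rfl⟩; exact ⟨j, rfl⟩
  · rintro ⟨j, rfl⟩; exact ⟨j, j.isLt, rfl⟩

lemma pIdeal_succ (i : ℕ) (hi : i < t) :
    pIdeal t gs i ⊔ Ideal.span {gs ⟨i, hi⟩} = pIdeal t gs (i + 1) := by
  unfold pIdeal
  rw [← Ideal.span_union]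
  congr 1
  ext p
  simp only [Set.mem_union, Set.mem_setOf_eq, Set.mem_singleton_iff]
  constructor
  · rintro (⟨j, hj, rfl⟩ | rfl)
    · exact ⟨j, by omega, rfl⟩
    · exact ⟨⟨i, hi⟩, by simp, rfl⟩
  · rintro ⟨j, hj, rfl⟩
    rcases Nat.lt_or_ge (j : ℕ) i with h | h
    · exact Or.inl ⟨j, h, rfl⟩
    · right
      have : j = (⟨i, hi⟩ : Fin t) := by
        apply Fin.ext
        simp only []
        omega
      rw [this]

lemma ofList_take_eq_pIdeal (i : ℕ) (hi : i ≤ t) :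
    Ideal.ofList ((List.ofFn gs).take i) = pIdeal t gs i := by
  unfold pIdeal
  refine congrArg Ideal.span ?_
  ext x
  simp only [Set.mem_setOf_eq]
  constructor
  · intro hx
    rw [List.mem_iff_getElem] at hx
    obtain ⟨m, hm, hx⟩ := hx
    have hm' : m < i ∧ m < t := by
      simp only [List.length_take, List.length_ofFn] at hm
      omega
    refine ⟨⟨m, hm'.2⟩, hm'.1, ?_⟩
    rw [← hx, List.getElem_take, List.getElem_ofFn]
  · rintro ⟨j, hj, rfl⟩
    rw [List.mem_iff_getElem]
    refine ⟨(j : ℕ), by simp only [List.length_take, List.length_ofFn]; omega, ?_⟩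
    rw [List.getElem_take, List.getElem_ofFn]

open RingTheory.Sequence in
lemma partial_prime
    (hhom : ∀ i, ∃ d : ℕ, 0 < d ∧ (gs i).IsHomogeneous d)
    (hwreg : IsWeaklyRegular (MvPolynomial (Fin n) k) (List.ofFn gs))
    (hprime : (Ideal.span (Set.range gs)).IsPrime) :
    ∀ i : ℕ, i ≤ t → (pIdeal t gs i).IsPrime := by
  -- regularity of the i-th element modulo the first i
  have hreg' : ∀ (i : ℕ) (hi : i < t), ∀ y,
      gs ⟨i, hi⟩ * y ∈ pIdeal t gs i → y ∈ pIdeal t gs i := by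
    intro i hi y hy
    have hlen : i < (List.ofFn gs).length := by simpa using hi
    have hsr := hwreg.regular_mod_prev i hlen
    have helem : (List.ofFn gs)[i]'hlen = gs ⟨i, hi⟩ := List.getElem_ofFn hlen
    rw [helem] at hsr
    have hN : (Ideal.ofList ((List.ofFn gs).take i) • ⊤ :
        Submodule (MvPolynomial (Fin n) k) (MvPolynomial (Fin n) k)) = pIdeal t gs i := by
      rw [smul_eq_mul, Ideal.mul_top, ofList_take_eq_pIdeal gs i (le_of_lt hi)]
    have hmk : (Submodule.Quotient.mk (gs ⟨i, hi⟩ • y) :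
        MvPolynomial (Fin n) k ⧸ (Ideal.ofList ((List.ofFn gs).take i) • ⊤ :
          Submodule (MvPolynomial (Fin n) k) (MvPolynomial (Fin n) k))) = 0 := by
      rw [Submodule.Quotient.mk_eq_zero, hN]
      exact hy
    rw [Submodule.Quotient.mk_smul] at hmk
    have h2 := hsr (by rw [hmk, smul_zero] :
      gs ⟨i, hi⟩ • (Submodule.Quotient.mk y) = gs ⟨i, hi⟩ • (0 :
        MvPolynomial (Fin n) k ⧸ (Ideal.ofList ((List.ofFn gs).take i) • ⊤ :
          Submodule (MvPolynomial (Fin n) k) (MvPolynomial (Fin n) k))))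
    rw [Submodule.Quotient.mk_eq_zero, hN] at h2
    exact h2
  -- downward induction
  have main : ∀ (d i : ℕ), i + d = t → (pIdeal t gs i).IsPrime := by
    intro d
    induction d with
    | zero =>
      intro i hi
      have : i = t := by omega
      subst this
      rw [pIdeal_top]
      exact hprime
    | succ d ih =>
      intro i hi
      have hi' : i < t := by omega
      have hnext := ih (i + 1) (by omega)
      obtain ⟨dh, hdh, hhomh⟩ := hhom ⟨i, hi'⟩
      have hP : (pIdeal t gs i ⊔ Ideal.span {gs ⟨i, hi'⟩}).IsPrime := by
        rw [pIdeal_succ gs i hi']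
        exact hnext
      refine span_prime_descent ?_ hdh hhomh ?_ hP
      · rintro x ⟨j, -, rfl⟩
        obtain ⟨dj, -, hdj⟩ := hhom j
        exact ⟨dj, hdj⟩
      · exact hreg' i hi'
  intro i hi
  exact main (t - i) i (by omega)


end PrimeSeqAux

open PrimeSeqAux RingTheory.Sequence in
/-- **Lemma (primeseq., second part).** If `g 1, …, g t` is a homogeneous regular sequence of
elements of positive degree in a standard graded polynomial ring over a field, generating a prime
ideal, then any permutation `g ∘ σ` of the sequence is a prime sequence: the ideal it generates is
proper and the quotient by the first `i` terms is a domain for all `1 ≤ i ≤ t`. -/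
theorem prime_sequence_of_permutation_of_regular_sequence_span_prime
    (k : Type*) [Field k] (n t : ℕ) (g : Fin t → MvPolynomial (Fin n) k)
    (hhom : ∀ i, ∃ d : ℕ, 0 < d ∧ (g i).IsHomogeneous d)
    (hreg : RingTheory.Sequence.IsRegular (MvPolynomial (Fin n) k) (List.ofFn g))
    (hprime : (Ideal.span (Set.range g)).IsPrime)
    (σ : Equiv.Perm (Fin t)) :
    Ideal.span (Set.range (g ∘ σ)) ≠ ⊤ ∧
    ∀ i : ℕ, 1 ≤ i → i ≤ t →
      IsDomain (MvPolynomial (Fin n) k ⧸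
        Ideal.span {p : MvPolynomial (Fin n) k | ∃ j : Fin t, (j : ℕ) < i ∧ p = g (σ j)}) := by
  classical
  have hrange : Set.range (g ∘ σ) = Set.range g := by
    rw [Set.range_comp, σ.surjective.range_eq, Set.image_univ]
  have hperm : (List.ofFn g).Perm (List.ofFn (g ∘ σ)) := by
    have h1 : List.ofFn (g ∘ σ) = List.map g (List.map σ (List.finRange t)) := by
      rw [List.map_map, List.ofFn_eq_map]
    have h2 : (List.map (⇑σ) (List.finRange t)).Perm (List.finRange t) := by
      apply List.perm_of_nodup_nodup_toFinset_eq
      · exact (List.nodup_finRange t).map σ.injective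
      · exact List.nodup_finRange t
      · ext x
        simp only [List.mem_toFinset, List.mem_map, List.mem_finRange, true_and]
        exact ⟨fun _ => trivial, fun _ => ⟨σ.symm x, σ.apply_symm_apply x⟩⟩
    rw [h1, List.ofFn_eq_map]
    exact (h2.map g).symm
  have hwreg : IsWeaklyRegular (MvPolynomial (Fin n) k) (List.ofFn (g ∘ σ)) := by
    refine hreg.toIsWeaklyRegular.prototype_perm hperm ?_
    intro a b rs' hsub
    intro K hK
    have hmem := hsub.subset
    have hahom : ∃ da, 0 < da ∧ a.IsHomogeneous da := by
      have ha : a ∈ List.ofFn g := hmem List.mem_cons_self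
      obtain ⟨i, rfl⟩ := (List.mem_ofFn).mp ha
      exact hhom i
    obtain ⟨da, hda, hahom⟩ := hahom
    have hIhc : ∀ d x, x ∈ Ideal.ofList rs' → homogeneousComponent d x ∈ Ideal.ofList rs' := by
      intro d x hx
      refine span_hc ?_ d hx
      intro z hz
      have hzg : z ∈ List.ofFn g := hmem (List.mem_cons_of_mem _ (List.mem_cons_of_mem _ hz))
      obtain ⟨i, rfl⟩ := (List.mem_ofFn).mp hzg
      obtain ⟨d', -, hd'⟩ := hhom i
      exact ⟨d', hd'⟩
    exact torsion_eq_bot hIhc hda hahom K hK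
  constructor
  · rw [hrange]
    exact hprime.ne_top
  · intro i hi1 hi2
    have hp : (pIdeal t (g ∘ σ) i).IsPrime := by
      refine partial_prime (g ∘ σ) (fun j => hhom (σ j)) hwreg ?_ i hi2
      rw [hrange]
      exact hprime
    have hpi : pIdeal t (g ∘ σ) i =
        Ideal.span {p : MvPolynomial (Fin n) k | ∃ j : Fin t, (j : ℕ) < i ∧ p = g (σ j)} := rfl
    rw [hpi] at hp
    exact Ideal.Quotient.isDomain _
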